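/- Let B satisfy BK = KB* and B*B = 1, and let a,b ∈ C with |a|² - |b|² = 1. Then for g(ψ) = aψ + bBKψ, the quantity Q(ψ)² - |Λ(ψ)|² is invariant: Q(gψ)² - |Λ(gψ)|² = Q(ψ)² - |Λ(ψ)|², where Q(ψ) = ψ*ψ and Λ(ψ) = ψ*(BKψ). -/

import Mathlib

open Matrix

/-- Invariance of Q² - |Λ|² under the Bogoliubov transformation g = a + bBK. -/
theorem stmt_6 (N : ℕ) (B : Matrix (Fin N) (Fin N) ℂ)
    (hBK : ∀ ψ : Fin N → ℂ,
      B.mulVec (fun i => (starRingEnd ℂ) (ψ i)) =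
        fun i => (starRingEnd ℂ) (Bᴴ.mulVec ψ i))
    (hB : Bᴴ * B = 1)
    (a b : ℂ) (hab : ‖a‖ ^ 2 - ‖b‖ ^ 2 = 1) (ψ : Fin N → ℂ) :
    (star (a • ψ + b • B.mulVec (fun i => (starRingEnd ℂ) (ψ i))) ⬝ᵥ
        (a • ψ + b • B.mulVec (fun i => (starRingEnd ℂ) (ψ i)))) ^ 2 -
      ((‖star (a • ψ + b • B.mulVec (fun i => (starRingEnd ℂ) (ψ i))) ⬝ᵥ
        B.mulVec (fun i => (starRingEnd ℂ)
          ((a • ψ + b • B.mulVec (fun j => (starRingEnd ℂ) (ψ j))) i))‖ : ℝ) : ℂ) ^ 2 =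
    (star ψ ⬝ᵥ ψ) ^ 2 -
      ((‖star ψ ⬝ᵥ B.mulVec (fun i => (starRingEnd ℂ) (ψ i))‖ : ℝ) : ℂ) ^ 2 := by
  classical
  have hnorm : ∀ z : ℂ, ((‖z‖ : ℝ) : ℂ) ^ 2 = z * star z := by
    intro z
    rw [← starRingEnd_apply, Complex.mul_conj]
    norm_cast
    simp [Complex.normSq_eq_norm_sq]
  have hab' : a * star a - b * star b = 1 := by
    have h1 : ∀ z : ℂ, z * star z = ((‖z‖ ^ 2 : ℝ) : ℂ) := by
      intro z
      rw [← starRingEnd_apply, Complex.mul_conj]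
      norm_cast
      simp [Complex.normSq_eq_norm_sq]
    rw [h1, h1, ← Complex.ofReal_sub, hab, Complex.ofReal_one]
  have hBB : B * Bᴴ = 1 := mul_eq_one_comm.mp hB
  set c : Fin N → ℂ := (fun i => (starRingEnd ℂ) (ψ i)) with hc
  set φ : Fin N → ℂ := B.mulVec c with hφ
  have hφ' : φ = fun i => (starRingEnd ℂ) (Bᴴ.mulVec ψ i) := hBK ψ
  have hcφ : (fun i => (starRingEnd ℂ) (φ i)) = Bᴴ.mulVec ψ := by
    funext i
    rw [hφ']
    simp
  set Q : ℂ := star ψ ⬝ᵥ ψ with hQ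
  set L : ℂ := star ψ ⬝ᵥ φ with hL
  have hQφ : star φ ⬝ᵥ φ = Q := by
    rw [hφ, star_mulVec, Matrix.dotProduct_mulVec, Matrix.vecMul_vecMul, hB,
      Matrix.vecMul_one]
    simp [hQ, hc, dotProduct, mul_comm]
  have hLφ : star φ ⬝ᵥ ψ = star L := by
    simp [hL, dotProduct, map_sum, mul_comm]
  have hQreal : star Q = Q := by
    simp [hQ, dotProduct, map_sum, mul_comm]
  have hg : B.mulVec (fun i => (starRingEnd ℂ) ((a • ψ + b • φ) i)) =
      star a • φ + star b • ψ := by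
    have h1 : (fun i => (starRingEnd ℂ) ((a • ψ + b • φ) i)) =
        star a • c + star b • Bᴴ.mulVec ψ := by
      funext i
      simp only [Pi.add_apply, Pi.smul_apply, smul_eq_mul, map_add, _root_.map_mul, ← hcφ]
      rfl
    rw [h1, Matrix.mulVec_add, Matrix.mulVec_smul, Matrix.mulVec_smul,
      Matrix.mulVec_mulVec, hBB, Matrix.one_mulVec]
  have hQ' : star (a • ψ + b • φ) ⬝ᵥ (a • ψ + b • φ) =
      (a * star a + b * star b) * Q + star a * b * L + a * star b * star L := by
    simp only [star_add, star_smul, add_dotProduct, dotProduct_add, smul_dotProduct,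
      dotProduct_smul, smul_eq_mul, hQφ, hLφ, ← hQ, ← hL]
    ring
  have hL' : star (a • ψ + b • φ) ⬝ᵥ B.mulVec (fun i => (starRingEnd ℂ) ((a • ψ + b • φ) i)) =
      star a ^ 2 * L + 2 * star a * star b * Q + star b ^ 2 * star L := by
    rw [hg]
    simp only [star_add, star_smul, add_dotProduct, dotProduct_add, smul_dotProduct,
      dotProduct_smul, smul_eq_mul, hQφ, hLφ, ← hQ, ← hL]
    ring
  rw [hnorm, hnorm, hQ', hL']
  simp only [star_add, star_mul', star_pow, star_star, star_ofNat, hQreal]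
  linear_combination (a * star a - b * star b + 1) * (Q ^ 2 - L * star L) * hab'
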